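/- Global subsequential convergence of PANOC: let 0 < γ < 1/L, σ > 0, and assume φ = ℓ + g is bounded below. Let (u^k) and (ū^k) be sequences in E with ū^k ∈ T_γ(u^k) for every k, set r^k := (u^k − ū^k)/γ, and suppose the sufficient-decrease condition φ_γ(u^{k+1}) ≤ φ_γ(u^k) − σ‖r^k‖² holds for every k. Then: (a) Σ_{k} ‖r^k‖² < ∞, hence r^k → 0; (b) a point u' ∈ E is a cluster point of (u^k) if and only if it is a cluster point of (ū^k); (c) every cluster point u' of (u^k) satisfies the γ-criticality condition u' ∈ T_γ(u'), i.e., u' ∈ prox_{γg}(u' − γ∇ℓ(u')). -/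

import Mathlib

open scoped RealInnerProductSpace
open Filter Topology Asymptotics

/-- Moreau envelope `g^γ(v) = inf_w { g(w) + (1/(2γ))‖w − v‖² }` of an
extended-real-valued function `g`. -/
noncomputable def moreauEnv {E : Type*} [NormedAddCommGroup E] [InnerProductSpace ℝ E]
    (g : E → EReal) (γ : ℝ) (v : E) : EReal :=
  ⨅ w : E, g w + (((1 / (2 * γ)) * ‖w - v‖ ^ 2 : ℝ) : EReal)

/-- The (set-valued) proximal mapping
`prox_{γg}(v) = argmin_w { g(w) + (1/(2γ))‖w − v‖² }`. -/
def proxSet {E : Type*} [NormedAddCommGroup E] [InnerProductSpace ℝ E]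
    (g : E → EReal) (γ : ℝ) (v : E) : Set E :=
  {w | ∀ w' : E, g w + (((1 / (2 * γ)) * ‖w - v‖ ^ 2 : ℝ) : EReal)
      ≤ g w' + (((1 / (2 * γ)) * ‖w' - v‖ ^ 2 : ℝ) : EReal)}

/-- The forward–backward envelope
`φ_γ(u) = ℓ(u) − (γ/2)‖∇ℓ(u)‖² + g^γ(u − γ∇ℓ(u))`, where `l'` plays the role
of the gradient `∇ℓ`. -/
noncomputable def fbe {E : Type*} [NormedAddCommGroup E] [InnerProductSpace ℝ E]
    (l : E → ℝ) (l' : E → E) (g : E → EReal) (γ : ℝ) (u : E) : EReal :=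
  ((l u - (γ / 2) * ‖l' u‖ ^ 2 : ℝ) : EReal) + moreauEnv g γ (u - γ • l' u)

section Aux

variable {E : Type*} [NormedAddCommGroup E] [InnerProductSpace ℝ E]

lemma descent_lemma [CompleteSpace E]
    (l : E → ℝ) (l' : E → E) (L : ℝ)
    (hgrad : ∀ x : E, HasGradientAt l (l' x) x)
    (hlip : ∀ x y : E, ‖l' x - l' y‖ ≤ L * ‖x - y‖) (x y : E) :
    l y ≤ l x + ⟪l' x, y - x⟫ + L / 2 * ‖y - x‖ ^ 2 := by
  set c : ℝ → E := fun t => x + t • (y - x) with hc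
  have hcder : ∀ t : ℝ, HasDerivAt c (y - x) t := by
    intro t
    convert ((hasDerivAt_id t).smul_const (y - x)).const_add x using 1 <;> simp [hc]
  set h : ℝ → ℝ := fun t =>
    l (c t) - t * ⟪l' x, y - x⟫ - t ^ 2 * (L / 2 * ‖y - x‖ ^ 2) with hh
  have hd : ∀ t : ℝ, HasDerivAt h
      (⟪l' (c t), y - x⟫ - ⟪l' x, y - x⟫ - 2 * t * (L / 2 * ‖y - x‖ ^ 2)) t := by
    intro t
    have h1 : HasDerivAt (fun t => l (c t)) (⟪l' (c t), y - x⟫) t := by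
      have := ((hgrad (c t)).hasFDerivAt).comp_hasDerivAt t (hcder t)
      simp [InnerProductSpace.toDual_apply_apply] at this
      exact this
    have h2 : HasDerivAt (fun t : ℝ => t * ⟪l' x, y - x⟫) (⟪l' x, y - x⟫) t := by
      simpa using (hasDerivAt_id t).mul_const _
    have h3 : HasDerivAt (fun t : ℝ => t ^ 2 * (L / 2 * ‖y - x‖ ^ 2))
        (2 * t * (L / 2 * ‖y - x‖ ^ 2)) t := by
      simpa using ((hasDerivAt_pow 2 t).mul_const (L / 2 * ‖y - x‖ ^ 2))
    exact (h1.sub h2).sub h3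
  have key : h 1 ≤ h 0 := by
    have hanti : AntitoneOn h (Set.Icc (0:ℝ) 1) := by
      apply antitoneOn_of_deriv_nonpos (convex_Icc 0 1)
      · exact (fun t _ => ((hd t).differentiableAt.continuousAt.continuousWithinAt))
      · intro t ht
        exact (hd t).differentiableAt.differentiableWithinAt
      · intro t ht
        rw [(hd t).deriv]
        rw [interior_Icc] at ht
        have ht0 : (0:ℝ) ≤ t := le_of_lt ht.1
        have hinner : ⟪l' (c t), y - x⟫ - ⟪l' x, y - x⟫ ≤ L * t * ‖y - x‖ ^ 2 := by
          have := real_inner_le_norm (l' (c t) - l' x) (y - x)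
          have hlc : ‖l' (c t) - l' x‖ ≤ L * (t * ‖y - x‖) := by
            have h4 := hlip (c t) x
            have : c t - x = t • (y - x) := by simp [hc]
            rw [this, norm_smul, Real.norm_eq_abs, abs_of_nonneg ht0] at h4
            linarith
          calc ⟪l' (c t), y - x⟫ - ⟪l' x, y - x⟫ = ⟪l' (c t) - l' x, y - x⟫ := by
                rw [inner_sub_left]
            _ ≤ ‖l' (c t) - l' x‖ * ‖y - x‖ := real_inner_le_norm _ _
            _ ≤ L * (t * ‖y - x‖) * ‖y - x‖ :=
                mul_le_mul_of_nonneg_right hlc (norm_nonneg _)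
            _ = L * t * ‖y - x‖ ^ 2 := by ring
        nlinarith [hinner]
    exact hanti (by norm_num) (by norm_num) (by norm_num)
  have h0 : h 0 = l x := by simp [hh, hc]
  have h1 : h 1 = l y - ⟪l' x, y - x⟫ - L / 2 * ‖y - x‖ ^ 2 := by
    simp [hh, hc]
  rw [h0, h1] at key
  linarith

end Aux

/-- global subsequential convergence of PANOC: square-summability
of the residuals, coincidence of cluster points of `(u^k)` and `(ū^k)`, and
γ-criticality of every cluster point. -/
theorem panoc_global_subsequential_convergence
    {E : Type*} [NormedAddCommGroup E] [InnerProductSpace ℝ E] [FiniteDimensional ℝ E]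
    (l : E → ℝ) (l' : E → E) (g : E → EReal) (L γ : ℝ)
    (hL : 0 < L) (hγ : 0 < γ)
    (hgrad : ∀ x : E, HasGradientAt l (l' x) x)
    (hlip : ∀ x y : E, ‖l' x - l' y‖ ≤ L * ‖x - y‖)
    (hproper : ∃ x : E, g x ≠ ⊤) (hbot : ∀ x : E, g x ≠ ⊥)
    (hlsc : LowerSemicontinuous g)
    (hbdd : ∃ m : ℝ, ∀ x : E, (m : EReal) ≤ g x)
    (hγL : γ < 1 / L) (σ : ℝ) (hσ : 0 < σ)
    (hφbdd : ∃ m : ℝ, ∀ x : E, (m : EReal) ≤ (l x : EReal) + g x)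
    (u ub r : ℕ → E)
    (hub : ∀ k, ub k ∈ proxSet g γ (u k - γ • l' (u k)))
    (hr : ∀ k, r k = (1 / γ) • (u k - ub k))
    (hdec : ∀ k, fbe l l' g γ (u (k + 1)) ≤
        fbe l l' g γ (u k) - ((σ * ‖r k‖ ^ 2 : ℝ) : EReal)) :
    (Summable fun k => ‖r k‖ ^ 2) ∧
    Tendsto r atTop (𝓝 0) ∧
    (∀ u' : E, MapClusterPt u' atTop u ↔ MapClusterPt u' atTop ub) ∧
    (∀ u' : E, MapClusterPt u' atTop u → u' ∈ proxSet g γ (u' - γ • l' u')) := by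
  obtain ⟨x₀, hx₀⟩ := hproper
  obtain ⟨mφ, hmφ⟩ := hφbdd
  have hγ0 : γ ≠ 0 := ne_of_gt hγ
  -- g is finite on any prox point
  have hgfin : ∀ v : E, ∀ w ∈ proxSet g γ v, g w ≠ ⊤ := by
    intro v w hw htop
    have h1 := hw x₀
    rw [htop, EReal.top_add_coe] at h1
    exact absurd (lt_of_le_of_lt h1 (EReal.add_lt_top hx₀ (EReal.coe_ne_top _)))
      (lt_irrefl _)
  -- Moreau envelope value at a prox point
  have hmoreau : ∀ v : E, ∀ w ∈ proxSet g γ v,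
      moreauEnv g γ v = g w + (((1 / (2 * γ)) * ‖w - v‖ ^ 2 : ℝ) : EReal) := by
    intro v w hw
    refine le_antisymm (iInf_le _ w) (le_iInf fun w' => hw w')
  -- the real value of g at prox points
  set G : ℕ → ℝ := fun k => (g (ub k)).toReal with hGdef
  have hGco : ∀ k, g (ub k) = (G k : EReal) := by
    intro k
    exact (EReal.coe_toReal (hgfin _ _ (hub k)) (hbot _)).symm
  -- real value of the FBE along the iterates
  set v : ℕ → E := fun k => u k - γ • l' (u k) with hvdef
  set F : ℕ → ℝ := fun k =>
    l (u k) - γ / 2 * ‖l' (u k)‖ ^ 2 + (G k + (1 / (2 * γ)) * ‖ub k - v k‖ ^ 2)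
    with hFdef
  have hfbe : ∀ k, fbe l l' g γ (u k) = (F k : EReal) := by
    intro k
    rw [fbe, hmoreau _ _ (hub k), hGco k]
    rw [← EReal.coe_add, ← EReal.coe_add]
  -- the expansion of F
  have hFexp : ∀ k, F k =
      l (u k) + ⟪l' (u k), ub k - u k⟫ + (1 / (2 * γ)) * ‖ub k - u k‖ ^ 2 + G k := by
    intro k
    have hsq : ‖ub k - v k‖ ^ 2
        = ‖ub k - u k‖ ^ 2 + 2 * ⟪ub k - u k, γ • l' (u k)⟫ + ‖γ • l' (u k)‖ ^ 2 := by
      have : ub k - v k = (ub k - u k) + γ • l' (u k) := by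
        simp [hvdef]; abel
      rw [this, norm_add_sq_real]
    rw [hFdef]
    simp only [hsq]
    rw [real_inner_smul_right, norm_smul, Real.norm_eq_abs, abs_of_pos hγ]
    have : ⟪l' (u k), ub k - u k⟫ = ⟪ub k - u k, l' (u k)⟫ := real_inner_comm _ _
    rw [this]
    field_simp
    ring
  -- lower bound for F
  have hFlb : ∀ k, mφ ≤ F k := by
    intro k
    have hdesc := descent_lemma l l' L hgrad hlip (u k) (ub k)
    have hphi : mφ ≤ l (ub k) + G k := by
      have := hmφ (ub k)
      rw [hGco k, ← EReal.coe_add] at this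
      exact_mod_cast this
    have hcoef : L / 2 ≤ 1 / (2 * γ) := by
      rw [div_le_div_iff₀ (by norm_num) (by positivity)]
      have := (lt_div_iff₀ hL).mp hγL
      nlinarith
    have hnn : (0:ℝ) ≤ (1 / (2 * γ) - L / 2) * ‖ub k - u k‖ ^ 2 := by
      apply mul_nonneg (by linarith) (by positivity)
    rw [hFexp k]
    nlinarith [hdesc]
  -- decrease in real terms
  have hdecR : ∀ k, F (k + 1) ≤ F k - σ * ‖r k‖ ^ 2 := by
    intro k
    have := hdec k
    rw [hfbe, hfbe, ← EReal.coe_sub] at this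
    exact_mod_cast this
  -- partial sums bounded
  have hpartial : ∀ n, ∑ k ∈ Finset.range n, σ * ‖r k‖ ^ 2 ≤ F 0 - mφ := by
    intro n
    have key : ∀ n, ∑ k ∈ Finset.range n, σ * ‖r k‖ ^ 2 ≤ F 0 - F n := by
      intro n
      induction n with
      | zero => simp
      | succ n ih =>
        rw [Finset.sum_range_succ]
        have := hdecR n
        linarith
    have := key n
    have := hFlb n
    linarith
  have hsum : Summable fun k => σ * ‖r k‖ ^ 2 := by
    apply summable_of_sum_range_le (fun k => by positivity) hpartial
  have hsum2 : Summable fun k => ‖r k‖ ^ 2 := by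
    have := hsum.mul_left σ⁻¹
    simpa [mul_comm, inv_mul_cancel_left₀ (ne_of_gt hσ)] using this
  -- r → 0
  have hrsq : Tendsto (fun k => ‖r k‖ ^ 2) atTop (𝓝 0) := hsum2.tendsto_atTop_zero
  have hrnorm : Tendsto (fun k => ‖r k‖) atTop (𝓝 0) := by
    have := hrsq.sqrt
    simpa [Real.sqrt_sq (norm_nonneg _)] using this
  have hr0 : Tendsto r atTop (𝓝 0) := tendsto_zero_iff_norm_tendsto_zero.mpr hrnorm
  -- differences tend to zero
  have hdiffeq : ∀ k, u k - ub k = γ • r k := by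
    intro k
    rw [hr k, smul_smul]
    rw [mul_one_div, div_self hγ0, one_smul]
  have hdiff : Tendsto (fun k => u k - ub k) atTop (𝓝 0) := by
    have : Tendsto (fun k => γ • r k) atTop (𝓝 (γ • (0:E))) := hr0.const_smul γ
    rw [smul_zero] at this
    exact (funext hdiffeq : (fun k => u k - ub k) = fun k => γ • r k) ▸ this
  -- cluster point transfer
  have htransfer : ∀ (a b : ℕ → E), Tendsto (fun k => a k - b k) atTop (𝓝 0) →
      ∀ x : E, MapClusterPt x atTop a → MapClusterPt x atTop b := by
    intro a b hab x hx
    obtain ⟨ψ, hψ, hψt⟩ := TopologicalSpace.FirstCountableTopology.tendsto_subseq hx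
    have hbt : Tendsto (b ∘ ψ) atTop (𝓝 x) := by
      have h1 : Tendsto (fun n => a (ψ n) - b (ψ n)) atTop (𝓝 0) :=
        hab.comp hψ.tendsto_atTop
      have h2 : Tendsto (fun n => a (ψ n) - (a (ψ n) - b (ψ n))) atTop (𝓝 (x - 0)) :=
        hψt.sub h1
      simp at h2
      exact h2
    exact MapClusterPt.of_comp hψ.tendsto_atTop hbt.mapClusterPt
  have hiff : ∀ u' : E, MapClusterPt u' atTop u ↔ MapClusterPt u' atTop ub := by
    intro u'
    constructor
    · exact htransfer u ub hdiff u'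
    · apply htransfer ub u
      have : Tendsto (fun k => -(u k - ub k)) atTop (𝓝 (-0)) := hdiff.neg
      simpa [neg_sub] using this
  refine ⟨hsum2, hr0, hiff, ?_⟩
  -- criticality of cluster points
  intro u' hcl
  obtain ⟨ψ, hψ, hψt⟩ := TopologicalSpace.FirstCountableTopology.tendsto_subseq hcl
  have hubt : Tendsto (fun n => ub (ψ n)) atTop (𝓝 u') := by
    have h1 : Tendsto (fun n => u (ψ n) - ub (ψ n)) atTop (𝓝 0) :=
      hdiff.comp hψ.tendsto_atTop
    have h2 := hψt.sub h1
    simpa using h2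
  have hl'cont : Continuous l' := by
    apply LipschitzWith.continuous (K := ⟨L, hL.le⟩)
    apply LipschitzWith.of_dist_le_mul
    intro x y
    rw [dist_eq_norm, dist_eq_norm]
    exact hlip x y
  have hvt : Tendsto (fun n => v (ψ n)) atTop (𝓝 (u' - γ • l' u')) := by
    apply Tendsto.sub hψt
    exact ((hl'cont.tendsto u').comp hψt).const_smul γ
  set v' : E := u' - γ • l' u' with hv'def
  intro w'
  by_cases hw : g w' = ⊤
  · rw [hw, EReal.top_add_coe]
    exact le_top
  -- g w' is a real number
  have hWco : g w' = ((g w').toReal : EReal) := (EReal.coe_toReal hw (hbot w')).symm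
  set W : ℝ := (g w').toReal with hWdef
  by_contra hcon
  push_neg at hcon
  set c : ℝ := 1 / (2 * γ) * ‖u' - v'‖ ^ 2 with hcdef
  set c' : ℝ := 1 / (2 * γ) * ‖w' - v'‖ ^ 2 with hc'def
  obtain ⟨y, hy1, hy2⟩ := EReal.exists_between_coe_real hcon
  -- (y - c : EReal) < g u'
  have hylt : ((y - c : ℝ) : EReal) < g u' := by
    by_cases hu'top : g u' = ⊤
    · rw [hu'top]; exact EReal.coe_lt_top _
    · have hu'co : g u' = ((g u').toReal : EReal) := (EReal.coe_toReal hu'top (hbot u')).symm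
      rw [hu'co] at hy2 ⊢
      rw [← EReal.coe_add] at hy2
      rw [EReal.coe_lt_coe_iff] at hy2 ⊢
      linarith
  -- eventually g (ub (ψ n)) > y - c
  have hev : ∀ᶠ n in atTop, ((y - c : ℝ) : EReal) < g (ub (ψ n)) := by
    have := hlsc u' _ hylt
    exact hubt.eventually this
  -- eventually the real inequality
  have hineq : ∀ᶠ n in atTop,
      y - c + 1 / (2 * γ) * ‖ub (ψ n) - v (ψ n)‖ ^ 2
        ≤ W + 1 / (2 * γ) * ‖w' - v (ψ n)‖ ^ 2 := by
    filter_upwards [hev] with n hn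
    have hprox := hub (ψ n) w'
    have hlt : ((y - c : ℝ) : EReal) + ((1 / (2 * γ) * ‖ub (ψ n) - v (ψ n)‖ ^ 2 : ℝ) : EReal)
        ≤ g w' + ((1 / (2 * γ) * ‖w' - v (ψ n)‖ ^ 2 : ℝ) : EReal) := by
      refine le_trans (le_of_lt ?_) hprox
      exact EReal.add_lt_add_right_coe hn _
    rw [hWco, ← EReal.coe_add, ← EReal.coe_add, EReal.coe_le_coe_iff] at hlt
    exact hlt
  -- take limits
  have hlhs : Tendsto (fun n => y - c + 1 / (2 * γ) * ‖ub (ψ n) - v (ψ n)‖ ^ 2)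
      atTop (𝓝 (y - c + c)) := by
    apply Tendsto.const_add
    rw [hcdef]
    exact (Tendsto.norm (hubt.sub hvt)).pow 2 |>.const_mul _
  have hrhs : Tendsto (fun n => W + 1 / (2 * γ) * ‖w' - v (ψ n)‖ ^ 2)
      atTop (𝓝 (W + c')) := by
    apply Tendsto.const_add
    rw [hc'def]
    exact (Tendsto.norm ((tendsto_const_nhds).sub hvt)).pow 2 |>.const_mul _
  have hfinal : y - c + c ≤ W + c' := le_of_tendsto_of_tendsto hlhs hrhs hineq
  rw [hWco, ← EReal.coe_add, EReal.coe_lt_coe_iff] at hy1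
  linarith
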